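/- Let C₁, A₁, A₂, A₃, A₄ be real constants with A₁ ≠ 0 and A₄ ≠ 0. Define functions of t by q₁(t) = C₁, p₁(t) = A₄ e^{(4/27)(A₂+A₃)t}, r₁(t) = p₁(t)/A₁, s₁(t) = (A₂/A₄) e^{−(4/27)(A₂+A₃)t}, w₁(t) = A₃/r₁(t). Then (q₁, p₁, r₁, s₁, w₁) solves the single-peakon dynamical system of the four-component equation with H = 0: q₁' = 0, p₁' = (4/27)p₁(p₁s₁ + r₁w₁), r₁' = (4/27)r₁(p₁s₁ + r₁w₁), s₁' = −(4/27)s₁(p₁s₁ + r₁w₁), w₁' = −(4/27)w₁(p₁s₁ + r₁w₁). -/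

import Mathlib

lemma deriv_cexp' (c k t : ℝ) :
    deriv (fun t => c * Real.exp (k * t)) t = k * (c * Real.exp (k * t)) := by
  have h : HasDerivAt (fun t : ℝ => c * Real.exp (k * t))
      (c * (Real.exp (k * t) * k)) t := by
    simpa using (((hasDerivAt_id t).const_mul k).exp).const_mul c
  rw [h.deriv]; ring

/-- the explicit stationary single-peakon functions solve the N = 1 peakon
dynamical system of the four-component equation with H = 0. -/
theorem stationary_peakon_solution (C₁ A₁ A₂ A₃ A₄ : ℝ) (hA₁ : A₁ ≠ 0) (hA₄ : A₄ ≠ 0)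
    (q₁ p₁ r₁ s₁ w₁ : ℝ → ℝ)
    (hq : q₁ = fun _ => C₁)
    (hp : p₁ = fun t => A₄ * Real.exp ((4 / 27) * (A₂ + A₃) * t))
    (hr : r₁ = fun t => p₁ t / A₁)
    (hs : s₁ = fun t => (A₂ / A₄) * Real.exp (-(4 / 27) * (A₂ + A₃) * t))
    (hw : w₁ = fun t => A₃ / r₁ t) :
    ∀ t : ℝ,
      deriv q₁ t = 0 ∧
      deriv p₁ t = (4 / 27) * p₁ t * (p₁ t * s₁ t + r₁ t * w₁ t) ∧
      deriv r₁ t = (4 / 27) * r₁ t * (p₁ t * s₁ t + r₁ t * w₁ t) ∧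
      deriv s₁ t = -(4 / 27) * s₁ t * (p₁ t * s₁ t + r₁ t * w₁ t) ∧
      deriv w₁ t = -(4 / 27) * w₁ t * (p₁ t * s₁ t + r₁ t * w₁ t) := by
  set k : ℝ := (4 / 27) * (A₂ + A₃) with hk
  have hr' : r₁ = fun t => (A₄ / A₁) * Real.exp (k * t) := by
    funext t; simp only [hr, hp]; ring
  have hs' : s₁ = fun t => (A₂ / A₄) * Real.exp ((-k) * t) := by
    funext t; simp only [hs]; rw [hk]; ring_nf
  have hw' : w₁ = fun t => (A₃ * A₁ / A₄) * Real.exp ((-k) * t) := by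
    funext t; simp only [hw, hr, hp]
    rw [show (-k) * t = -(k * t) by ring, Real.exp_neg]
    field_simp
  have hb : ∀ t, p₁ t * s₁ t + r₁ t * w₁ t = A₂ + A₃ := by
    intro t
    simp only [hp, hs', hr', hw', hk]
    rw [show (-k) * t = -(k * t) by ring, Real.exp_neg]
    field_simp
    rw [hk]; ring
  intro t
  refine ⟨?_, ?_, ?_, ?_, ?_⟩
  · rw [hq]; simp
  · rw [hb t, hp]; simp only [deriv_cexp', hk]; ring
  · rw [hb t, hr']; simp only [deriv_cexp', hk]; ring
  · rw [hb t, hs']; simp only [deriv_cexp', hk]; ring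
  · rw [hb t, hw']; simp only [deriv_cexp', hk]; ring
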